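/- arXiv:1304.3914 — 2 statements merged into one kernel-verified Lean document; each statement's English description precedes it below -/
import Mathlib

section
/- For a Bell-diagonal state (x⃗ = y⃗ = 0, T = diag(t₁,t₂,t₃)), the conditional entropy satisfies S(n̂) = h₂((1+|T n̂|)/2) for every unit vector n̂, and its minimum over all unit vectors equals h₂((1+t_max)/2) where t_max = max{|t₁|,|t₂|,|t₃|}. -/
noncomputable section
open Matrix

def dot3 (u v : Fin 3 → ℝ) : ℝ := ∑ i, u i * v i
def norm3 (v : Fin 3 → ℝ) : ℝ := Real.sqrt (dot3 v v)

/-- Binary Shannon entropy (base 2). -/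
def h2 (x : ℝ) : ℝ := -(x * Real.logb 2 x) - (1 - x) * Real.logb 2 (1 - x)

/-- Shannon entropy of four probabilities. -/
def h4 (a b c d : ℝ) : ℝ :=
  -(a * Real.logb 2 a) - b * Real.logb 2 b - c * Real.logb 2 c - d * Real.logb 2 d

/-- The conditional entropy `S(n̂) = h₄(w⃗) - h₂(p₀)`. -/
def condEnt (x y : Fin 3 → ℝ) (T : Matrix (Fin 3) (Fin 3) ℝ) (n : Fin 3 → ℝ) : ℝ :=
  let p0 := (1 + dot3 y n) / 2
  let p1 := (1 - dot3 y n) / 2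
  h4 ((2 * p0 + norm3 (x + T.mulVec n)) / 4) ((2 * p0 - norm3 (x + T.mulVec n)) / 4)
     ((2 * p1 + norm3 (x - T.mulVec n)) / 4) ((2 * p1 - norm3 (x - T.mulVec n)) / 4)
    - h2 p0

lemma h2_eq (x : ℝ) : h2 x = Real.binEntropy x / Real.log 2 := by
  simp [h2, Real.binEntropy, Real.logb, Real.log_inv]
  ring

lemma mul_logb_half (x : ℝ) : x * Real.logb 2 (x / 2) = x * Real.logb 2 x - x := by
  rcases eq_or_ne x 0 with h | h
  · simp [h]
  · rw [Real.logb_div h (by norm_num), Real.logb_self_eq_one (by norm_num)]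
    ring

lemma h2_half : h2 (1 / 2 : ℝ) = 1 := by
  rw [h2_eq, show (1/2 : ℝ) = 2⁻¹ by norm_num, Real.binEntropy_two_inv]
  exact div_self (ne_of_gt (Real.log_pos (by norm_num : (1:ℝ) < 2)))

/-- antitonicity of `r ↦ h2 ((1+r)/2)` on `[0,1]`. -/
lemma h2_anti {r s : ℝ} (h0 : 0 ≤ r) (hrs : r ≤ s) (h1 : s ≤ 1) :
    h2 ((1 + s) / 2) ≤ h2 ((1 + r) / 2) := by
  rw [h2_eq, h2_eq]
  apply div_le_div_of_nonneg_right _ (Real.log_pos (by norm_num : (1:ℝ) < 2)).le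
  apply Real.binEntropy_strictAntiOn.antitoneOn _ _ (by linarith)
  · constructor <;> [norm_num; linarith] <;> linarith
  · constructor <;> [norm_num; linarith] <;> linarith

lemma dot3_self_nonneg (v : Fin 3 → ℝ) : 0 ≤ dot3 v v :=
  Finset.sum_nonneg fun i _ => mul_self_nonneg _

lemma norm3_nonneg (v : Fin 3 → ℝ) : 0 ≤ norm3 v := Real.sqrt_nonneg _

lemma norm3_neg (v : Fin 3 → ℝ) : norm3 (-v) = norm3 v := by
  simp [norm3, dot3]

/-- `condEnt 0 0 T n = h2 ((1 + |Tn|)/2)`. -/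
lemma condEnt_eq (T : Matrix (Fin 3) (Fin 3) ℝ) (n : Fin 3 → ℝ) :
    condEnt 0 0 T n = h2 ((1 + norm3 (T.mulVec n)) / 2) := by
  set r := norm3 (T.mulVec n) with hrdef
  have h0 : (0 : Fin 3 → ℝ) - T.mulVec n = -(T.mulVec n) := by simp
  have h0' : (0 : Fin 3 → ℝ) + T.mulVec n = T.mulVec n := by simp
  have hd : dot3 0 n = 0 := by simp [dot3]
  rw [condEnt]
  simp only [hd, h0, h0', norm3_neg, ← hrdef]
  have e1 : (2 * ((1 + 0 : ℝ) / 2) + r) / 4 = ((1 + r) / 2) / 2 := by ring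
  have e2 : (2 * ((1 + 0 : ℝ) / 2) - r) / 4 = ((1 - r) / 2) / 2 := by ring
  have e3 : (2 * ((1 - 0 : ℝ) / 2) + r) / 4 = ((1 + r) / 2) / 2 := by ring
  have e4 : (2 * ((1 - 0 : ℝ) / 2) - r) / 4 = ((1 - r) / 2) / 2 := by ring
  have e0 : (1 + (0 : ℝ)) / 2 = 1 / 2 := by norm_num
  rw [e1, e2, e3, e4, e0, h4, h2_half, h2]
  have e5 : (1 : ℝ) - (1 + r) / 2 = (1 - r) / 2 := by ring
  rw [e5]
  have l1 := mul_logb_half ((1 + r) / 2)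
  have l2 := mul_logb_half ((1 - r) / 2)
  linear_combination (-1 : ℝ) * l1 + (-1 : ℝ) * l2

lemma norm3_diag (t n : Fin 3 → ℝ) :
    norm3 ((Matrix.diagonal t).mulVec n) =
      Real.sqrt (∑ i, (t i * n i) ^ 2) := by
  simp [norm3, dot3, Matrix.mulVec_diagonal, sq]

/-- For Bell-diagonal states (`x⃗ = y⃗ = 0`, `T = diag(t₁,t₂,t₃)`, `|tᵢ| ≤ 1`):
`S(n̂) = h₂((1+|T n̂|)/2)` for every unit `n̂`, and its minimum over unit vectors
is `h₂((1+t_max)/2)` with `t_max = max{|t₁|,|t₂|,|t₃|}`. -/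
theorem bell_diagonal_conditional_entropy (t : Fin 3 → ℝ) (ht : ∀ i, |t i| ≤ 1) :
    let T := Matrix.diagonal t
    let tmax := max |t 0| (max |t 1| |t 2|)
    (∀ n : Fin 3 → ℝ, dot3 n n = 1 →
        condEnt 0 0 T n = h2 ((1 + norm3 (T.mulVec n)) / 2)) ∧
    IsLeast {s : ℝ | ∃ n : Fin 3 → ℝ, dot3 n n = 1 ∧ s = condEnt 0 0 T n}
      (h2 ((1 + tmax) / 2)) := by
  intro T tmax
  have htmax0 : 0 ≤ tmax := le_trans (abs_nonneg _) (le_max_left _ _)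
  have htmax1 : tmax ≤ 1 := max_le (ht 0) (max_le (ht 1) (ht 2))
  -- key bound: for unit n, |T n| ≤ tmax
  have key : ∀ n : Fin 3 → ℝ, dot3 n n = 1 → norm3 (T.mulVec n) ≤ tmax := by
    intro n hn
    rw [norm3_diag]
    have hsum : (∑ i, (t i * n i) ^ 2) ≤ tmax ^ 2 := by
      have hb : ∀ i, (t i * n i) ^ 2 ≤ tmax ^ 2 * n i ^ 2 := by
        intro i
        have h1 : |t i| ≤ tmax := by
          fin_cases i
          · exact le_max_left _ _
          · exact le_trans (le_max_left _ _) (le_max_right _ _)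
          · exact le_trans (le_max_right _ _) (le_max_right _ _)
        have h2i : t i ^ 2 ≤ tmax ^ 2 := by
          nlinarith [sq_abs (t i), abs_nonneg (t i)]
        calc (t i * n i) ^ 2 = t i ^ 2 * n i ^ 2 := by ring
          _ ≤ tmax ^ 2 * n i ^ 2 := by nlinarith [sq_nonneg (n i)]
      calc (∑ i, (t i * n i) ^ 2) ≤ ∑ i, tmax ^ 2 * n i ^ 2 :=
            Finset.sum_le_sum fun i _ => hb i
        _ = tmax ^ 2 * ∑ i, n i * n i := by
            simp only [pow_two]; rw [← Finset.mul_sum]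
        _ = tmax ^ 2 := by
            rw [show (∑ i, n i * n i) = dot3 n n from rfl, hn, mul_one]
    calc Real.sqrt (∑ i, (t i * n i) ^ 2) ≤ Real.sqrt (tmax ^ 2) :=
          Real.sqrt_le_sqrt hsum
      _ = tmax := by rw [Real.sqrt_sq htmax0]
  have hfirst : ∀ n : Fin 3 → ℝ, dot3 n n = 1 →
      condEnt 0 0 T n = h2 ((1 + norm3 (T.mulVec n)) / 2) := by
    intro n hn
    exact condEnt_eq T n
  refine ⟨hfirst, ?_, ?_⟩
  · -- membership: pick the basis vector achieving the max
    obtain ⟨i, hi⟩ : ∃ i : Fin 3, |t i| = tmax := by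
      rcases le_total |t 0| (max |t 1| |t 2|) with h | h
      · rcases le_total |t 1| |t 2| with h' | h'
        · exact ⟨2, by simp [tmax, max_eq_right h, max_eq_right h']⟩
        · exact ⟨1, by simp [tmax, max_eq_right h, max_eq_left h']⟩
      · exact ⟨0, by simp [tmax, max_eq_left h]⟩
    have hn : dot3 (Pi.single i (1:ℝ)) (Pi.single i 1) = 1 := by
      fin_cases i <;> simp [dot3, Fin.sum_univ_three]
    refine ⟨Pi.single i 1, hn, ?_⟩
    rw [hfirst _ hn]
    have hnorm : norm3 (T.mulVec (Pi.single i 1)) = |t i| := by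
      rw [norm3_diag]
      have hs : (∑ j, (t j * (Pi.single i 1 : Fin 3 → ℝ) j) ^ 2) = t i ^ 2 := by
        fin_cases i <;> simp [Fin.sum_univ_three]
      rw [hs, Real.sqrt_sq_eq_abs]
    rw [hnorm, hi]
  · -- lower bound
    rintro s ⟨n, hn, rfl⟩
    rw [hfirst n hn]
    exact h2_anti (norm3_nonneg _) (key n hn) htmax1
end
end

section
/- Let t₁, t₂, t₃ ∈ ℝ with μ₁,₂ = (1 ± t₁ ± t₂ - t₃)/4 ≥ 0 and μ₃,₄ = (1 ± t₁ ∓ t₂ + t₃)/4 ≥ 0 (eigenvalues of a Bell-diagonal state). Then the quantum discord Q = 1 - h₄(μ₁,μ₂,μ₃,μ₄) + h₂((1+t_max)/2) is nonnegative, where t_max = max{|t₁|,|t₂|,|t₃|}. -/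
noncomputable section

/-- Gibbs-type inequality: `p log q - p log p ≤ q - p`. -/
lemma gibbs (p q : ℝ) (hp : 0 ≤ p) (hq : 0 < q) :
    p * Real.log q - p * Real.log p ≤ q - p := by
  rcases eq_or_lt_of_le hp with h | h
  · simp [← h]; linarith
  · have hl : Real.log (q / p) ≤ q / p - 1 := Real.log_le_sub_one_of_pos (by positivity)
    have hsplit : Real.log (q / p) = Real.log q - Real.log p :=
      Real.log_div hq.ne' h.ne'
    rw [hsplit] at hl
    have h2 := mul_le_mul_of_nonneg_left hl hp
    have hrw : p * (q / p - 1) = q - p := by field_simp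
    nlinarith

/-- Cell inequality for mutual-information nonnegativity. -/
lemma cell (p r c : ℝ) (hp : 0 ≤ p) (hpr : p ≤ r) (hpc : p ≤ c) :
    p * Real.log r + p * Real.log c - p * Real.log p ≤ r * c - p := by
  rcases eq_or_lt_of_le hp with h | h
  · simp [← h]; nlinarith
  · have hr : 0 < r := lt_of_lt_of_le h hpr
    have hc : 0 < c := lt_of_lt_of_le h hpc
    have hg := gibbs p (r * c) hp (mul_pos hr hc)
    rw [Real.log_mul hr.ne' hc.ne'] at hg
    nlinarith

/-- Subadditivity of Shannon entropy for a 2×2 joint distribution. -/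
lemma subadd (a b c d : ℝ) (ha : 0 ≤ a) (hb : 0 ≤ b) (hc : 0 ≤ c) (hd : 0 ≤ d)
    (hsum : a + b + c + d = 1) :
    -(a * Real.log a) - b * Real.log b - c * Real.log c - d * Real.log d ≤
      (-((a+b) * Real.log (a+b)) - (c+d) * Real.log (c+d))
      + (-((a+c) * Real.log (a+c)) - (b+d) * Real.log (b+d)) := by
  have h1 := cell a (a+b) (a+c) ha (by linarith) (by linarith)
  have h2 := cell b (a+b) (b+d) hb (by linarith) (by linarith)
  have h3 := cell c (c+d) (a+c) hc (by linarith) (by linarith)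
  have h4 := cell d (c+d) (b+d) hd (by linarith) (by linarith)
  have hs2 : (a+b)*(a+c) + (a+b)*(b+d) + (c+d)*(a+c) + (c+d)*(b+d) = 1 := by
    linear_combination (a+b+c+d+1) * hsum
  nlinarith [h1, h2, h3, h4, hs2]

/-- Binary entropy is at most `log 2`. -/
lemma binary_le (p q : ℝ) (hp : 0 ≤ p) (hq : 0 ≤ q) (hpq : p + q = 1) :
    -(p * Real.log p) - q * Real.log q ≤ Real.log 2 := by
  have h1 := gibbs p (1/2) hp (by norm_num)
  have h2 := gibbs q (1/2) hq (by norm_num)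
  have hl : Real.log (1/2 : ℝ) = -Real.log 2 := by
    rw [one_div, Real.log_inv]
  rw [hl] at h1 h2
  have h3 : p * Real.log 2 + q * Real.log 2 = Real.log 2 := by
    linear_combination Real.log 2 * hpq
  linarith

/-- Core bound: entropy of the 2×2 joint is at most `log 2` plus the entropy
of the marginal corresponding to `u`. -/
lemma core (u v a b c d : ℝ) (ha : 0 ≤ a) (hb : 0 ≤ b) (hc : 0 ≤ c) (hd : 0 ≤ d)
    (hsum : a + b + c + d = 1)
    (hab : a + b = (1+u)/2) (hcd : c + d = (1-u)/2)
    (hac : a + c = (1+v)/2) (hbd : b + d = (1-v)/2) :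
    -(a * Real.log a) - b * Real.log b - c * Real.log c - d * Real.log d ≤
      Real.log 2 +
      (-(((1+u)/2) * Real.log ((1+u)/2)) - ((1-u)/2) * Real.log ((1-u)/2)) := by
  have hsub := subadd a b c d ha hb hc hd hsum
  rw [hab, hcd, hac, hbd] at hsub
  have hbin := binary_le ((1+v)/2) ((1-v)/2) (by linarith) (by linarith) (by ring)
  linarith

/-- The binary entropy of `(1+u)/2` only depends on `|u|`. -/
lemma B2_abs (u : ℝ) :
    -(((1+u)/2) * Real.log ((1+u)/2)) - ((1-u)/2) * Real.log ((1-u)/2)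
    = -(((1+|u|)/2) * Real.log ((1+|u|)/2)) - ((1-|u|)/2) * Real.log ((1-|u|)/2) := by
  rcases abs_cases u with ⟨h, _⟩ | ⟨h, _⟩
  · rw [h]
  · rw [h, show (1 + -u)/2 = (1-u)/2 by ring, show (1 - -u)/2 = (1+u)/2 by ring]
    ring

/-- Nonnegativity of the quantum discord
`Q = 1 - h₄(μ₁,μ₂,μ₃,μ₄) + h₂((1+t_max)/2)` of a Bell-diagonal state with
correlation matrix `diag(t₁,t₂,t₃)`. -/
theorem bell_diagonal_discord_nonneg (t1 t2 t3 : ℝ)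
    (hμ1 : 0 ≤ (1 + t1 + t2 - t3) / 4)
    (hμ2 : 0 ≤ (1 - t1 - t2 - t3) / 4)
    (hμ3 : 0 ≤ (1 + t1 - t2 + t3) / 4)
    (hμ4 : 0 ≤ (1 - t1 + t2 + t3) / 4) :
    let tmax := max |t1| (max |t2| |t3|)
    0 ≤ 1 - h4 ((1 + t1 + t2 - t3) / 4) ((1 - t1 - t2 - t3) / 4)
          ((1 + t1 - t2 + t3) / 4) ((1 - t1 + t2 + t3) / 4)
        + h2 ((1 + tmax) / 2) := by
  intro tmax
  have htm : tmax = max |t1| (max |t2| |t3|) := rfl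
  have hlog2 : (0:ℝ) < Real.log 2 := Real.log_pos (by norm_num)
  have key : -((1 + t1 + t2 - t3) / 4 * Real.log ((1 + t1 + t2 - t3) / 4))
      - (1 - t1 - t2 - t3) / 4 * Real.log ((1 - t1 - t2 - t3) / 4)
      - (1 + t1 - t2 + t3) / 4 * Real.log ((1 + t1 - t2 + t3) / 4)
      - (1 - t1 + t2 + t3) / 4 * Real.log ((1 - t1 + t2 + t3) / 4)
      ≤ Real.log 2 +
        (-(((1+tmax)/2) * Real.log ((1+tmax)/2))
          - ((1-tmax)/2) * Real.log ((1-tmax)/2)) := by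
    have hcases : tmax = |t1| ∨ tmax = |t2| ∨ tmax = |t3| := by
      rcases max_cases |t1| (max |t2| |t3|) with ⟨h, _⟩ | ⟨h, _⟩
      · exact Or.inl (htm.trans h)
      · rcases max_cases |t2| |t3| with ⟨h', _⟩ | ⟨h', _⟩
        · exact Or.inr (Or.inl ((htm.trans h).trans h'))
        · exact Or.inr (Or.inr ((htm.trans h).trans h'))
    rcases hcases with hc | hc | hc
    · -- tmax = |t1| : pair (t1, t2)
      have h := core t1 t2 ((1 + t1 + t2 - t3) / 4) ((1 + t1 - t2 + t3) / 4)
        ((1 - t1 + t2 + t3) / 4) ((1 - t1 - t2 - t3) / 4)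
        hμ1 hμ3 hμ4 hμ2 (by ring) (by ring) (by ring) (by ring) (by ring)
      rw [B2_abs t1, ← hc] at h
      linarith
    · -- tmax = |t2| : pair (t2, t1)
      have h := core t2 t1 ((1 + t1 + t2 - t3) / 4) ((1 - t1 + t2 + t3) / 4)
        ((1 + t1 - t2 + t3) / 4) ((1 - t1 - t2 - t3) / 4)
        hμ1 hμ4 hμ3 hμ2 (by ring) (by ring) (by ring) (by ring) (by ring)
      rw [B2_abs t2, ← hc] at h
      linarith
    · -- tmax = |t3| : pair (t3, t1)
      have h := core t3 t1 ((1 + t1 - t2 + t3) / 4) ((1 - t1 + t2 + t3) / 4)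
        ((1 + t1 + t2 - t3) / 4) ((1 - t1 - t2 - t3) / 4)
        hμ3 hμ4 hμ1 hμ2 (by ring) (by ring) (by ring) (by ring) (by ring)
      rw [B2_abs t3, ← hc] at h
      linarith
  have hconv : 1 - h4 ((1 + t1 + t2 - t3) / 4) ((1 - t1 - t2 - t3) / 4)
          ((1 + t1 - t2 + t3) / 4) ((1 - t1 + t2 + t3) / 4)
        + h2 ((1 + tmax) / 2)
      = (Real.log 2
          - (-((1 + t1 + t2 - t3) / 4 * Real.log ((1 + t1 + t2 - t3) / 4))
            - (1 - t1 - t2 - t3) / 4 * Real.log ((1 - t1 - t2 - t3) / 4)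
            - (1 + t1 - t2 + t3) / 4 * Real.log ((1 + t1 - t2 + t3) / 4)
            - (1 - t1 + t2 + t3) / 4 * Real.log ((1 - t1 + t2 + t3) / 4))
          + (-(((1+tmax)/2) * Real.log ((1+tmax)/2))
            - ((1-tmax)/2) * Real.log ((1-tmax)/2))) / Real.log 2 := by
    unfold h4 h2 Real.logb
    rw [show (1:ℝ) - (1 + tmax)/2 = (1 - tmax)/2 by ring]
    field_simp
  rw [hconv]
  exact div_nonneg (by linarith) hlog2.le
end
end
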